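/- Let A be an n × n complex matrix. Then the set W(A) = { x* A x : x ∈ ℂⁿ, ‖x‖ = 1 } is convex. -/

import Mathlib

open scoped InnerProductSpace


lemma phase_choice (δ w : ℂ) : ∃ ω : ℂ, ‖ω‖ = 1 ∧ (ω * δ).im = 0 ∧ 0 ≤ (ω * w).re := by
  by_cases hδ : δ = 0
  · by_cases hw : 0 ≤ w.re
    · exact ⟨1, by simp, by simp [hδ], by simpa using hw⟩
    · exact ⟨-1, by simp, by simp [hδ], by simp; linarith⟩
  · set ω₁ : ℂ := (starRingEnd ℂ) δ / ‖δ‖ with hω₁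
    have habs : ‖δ‖ ≠ 0 := by simpa using hδ
    have hn1 : ‖ω₁‖ = 1 := by
      rw [hω₁, norm_div]
      simp [div_self habs]
    have him : (ω₁ * δ).im = 0 := by
      rw [hω₁, div_mul_eq_mul_div, Complex.conj_mul']
      rw [Complex.div_im]
      simp [Complex.ofReal_im, ← Complex.ofReal_pow]
    by_cases hw : 0 ≤ (ω₁ * w).re
    · exact ⟨ω₁, hn1, him, hw⟩
    · refine ⟨-ω₁, by simpa using hn1, ?_, ?_⟩
      · simp only [neg_mul, Complex.neg_im]
        rw [Complex.mul_im] at him ⊢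
        linarith
      · simp only [neg_mul, Complex.neg_re]
        linarith

lemma numrange_aux {E : Type*} [NormedAddCommGroup E] [InnerProductSpace ℂ E]
    (T : E →L[ℂ] E) (x y : E) (hx : ‖x‖ = 1) (hy : ‖y‖ = 1)
    (hxT : ⟪x, T x⟫_ℂ = 1) (hyT : ⟪y, T y⟫_ℂ = 0)
    {t : ℝ} (ht : t ∈ Set.Icc (0:ℝ) 1) :
    ∃ u : E, ‖u‖ = 1 ∧ ⟪u, T u⟫_ℂ = (t : ℂ) := by
  obtain ⟨ω, hω1, hωδ, hωw⟩ :=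
    phase_choice (⟪x, T y⟫_ℂ - (starRingEnd ℂ) ⟪y, T x⟫_ℂ) ⟪x, y⟫_ℂ
  set y' : E := ω • y with hy'def
  have hxx : ⟪x, x⟫_ℂ = 1 := by rw [inner_self_eq_norm_sq_to_K, hx]; norm_num
  have hy'n : ‖y'‖ = 1 := by rw [hy'def, norm_smul, hω1, hy, one_mul]
  have hy'y' : ⟪y', y'⟫_ℂ = 1 := by rw [inner_self_eq_norm_sq_to_K, hy'n]; norm_num
  have hy'T : ⟪y', T y'⟫_ℂ = 0 := by
    rw [hy'def, map_smul, inner_smul_left, inner_smul_right, hyT]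
    ring
  have hcross : (⟪x, T y'⟫_ℂ + ⟪y', T x⟫_ℂ).im = 0 := by
    rw [hy'def, map_smul, inner_smul_right, inner_smul_left]
    simp only [Complex.add_im, Complex.mul_im, Complex.sub_re, Complex.sub_im,
      Complex.conj_re, Complex.conj_im] at hωδ ⊢
    linarith
  have hre : 0 ≤ (⟪x, y'⟫_ℂ).re := by
    rw [hy'def, inner_smul_right]
    exact hωw
  set c : ℝ := (⟪x, y'⟫_ℂ).re with hc
  set r : ℝ := (⟪x, T y'⟫_ℂ + ⟪y', T x⟫_ℂ).re with hr
  -- the path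
  set v : ℝ → E := fun s => (s : ℂ) • x + ((1 - s : ℝ) : ℂ) • y' with hv
  have hF : ∀ s : ℝ, ⟪v s, T (v s)⟫_ℂ = ((s^2 + s*(1-s)*r : ℝ) : ℂ) := by
    intro s
    simp only [hv, map_add, map_smul, inner_add_left, inner_add_right,
      inner_smul_left, inner_smul_right, Complex.conj_ofReal, hxT, hy'T,
      mul_one, mul_zero, add_zero]
    rw [Complex.add_im] at hcross
    apply Complex.ext
    · simp only [Complex.add_re, Complex.mul_re, Complex.mul_im,
        Complex.ofReal_re, Complex.ofReal_im, hr, Complex.add_im]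
      ring
    · simp only [Complex.add_im, Complex.mul_re, Complex.mul_im,
        Complex.ofReal_re, Complex.ofReal_im]
      linear_combination (s * (1 - s)) * hcross
  have hN : ∀ s : ℝ, ‖v s‖^2 = s^2 + (1-s)^2 + 2*s*(1-s)*c := by
    intro s
    have h1 : ⟪v s, v s⟫_ℂ = ((s^2 + (1-s)^2 + 2*s*(1-s)*c : ℝ) : ℂ) := by
      simp only [hv, inner_add_left, inner_add_right, inner_smul_left,
        inner_smul_right, Complex.conj_ofReal, hxx, hy'y', mul_one]
      have h2 : ⟪y', x⟫_ℂ = (starRingEnd ℂ) ⟪x, y'⟫_ℂ := (inner_conj_symm y' x).symm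
      apply Complex.ext
      · simp only [h2, Complex.add_re, Complex.mul_re, Complex.ofReal_re,
          Complex.ofReal_im, Complex.conj_re, Complex.conj_im, hc]
        ring
      · simp only [h2, Complex.add_im, Complex.mul_im, Complex.ofReal_re,
          Complex.ofReal_im, Complex.conj_re, Complex.conj_im]
        ring
    have h3 := inner_self_eq_norm_sq_to_K (𝕜 := ℂ) (v s)
    rw [h1] at h3
    exact Complex.ofReal_inj.mp (by rw [Complex.ofReal_pow]; exact h3.symm)
  have hdpos : ∀ s ∈ Set.Icc (0:ℝ) 1, 0 < s^2 + (1-s)^2 + 2*s*(1-s)*c := by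
    intro s hs
    have h5 : 0 ≤ 2*s*(1-s)*c := by
      have : 0 ≤ s * (1 - s) := mul_nonneg hs.1 (by linarith [hs.2])
      nlinarith
    nlinarith [sq_nonneg (2*s-1)]
  set g : ℝ → ℝ := fun s => (s^2 + s*(1-s)*r) / (s^2 + (1-s)^2 + 2*s*(1-s)*c) with hg
  have hgc : ContinuousOn g (Set.Icc 0 1) := by
    apply ContinuousOn.div
    · fun_prop
    · fun_prop
    · exact fun s hs => (hdpos s hs).ne'
  have hg0 : g 0 = 0 := by simp [hg]
  have hg1 : g 1 = 1 := by norm_num [hg]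
  have hivt := intermediate_value_Icc (by norm_num : (0:ℝ) ≤ 1) hgc
  rw [hg0, hg1] at hivt
  obtain ⟨s, hs, hgs⟩ := hivt ht
  -- normalize
  set N : ℝ := ‖v s‖ with hNdef
  have hN2 : N^2 = s^2 + (1-s)^2 + 2*s*(1-s)*c := hN s
  have hNpos : 0 < N := by
    rcases lt_or_eq_of_le (norm_nonneg (v s)) with h | h
    · exact h
    · exfalso; rw [hNdef, ← h] at hN2; simp at hN2; nlinarith [hdpos s hs]
  refine ⟨((N⁻¹ : ℝ) : ℂ) • v s, ?_, ?_⟩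
  · rw [norm_smul, Complex.norm_real, Real.norm_eq_abs, abs_of_pos (inv_pos.mpr hNpos)]
    exact inv_mul_cancel₀ hNpos.ne'
  · rw [map_smul, inner_smul_left, inner_smul_right, Complex.conj_ofReal, hF s]
    have key : N⁻¹ * (N⁻¹ * (s^2 + s*(1-s)*r)) = t := by
      rw [← hgs]
      show N⁻¹ * (N⁻¹ * (s^2+s*(1-s)*r))
          = (s^2 + s*(1-s)*r) / (s^2 + (1-s)^2 + 2*s*(1-s)*c)
      rw [← hN2]
      have hNne : N ≠ 0 := hNpos.ne'
      rw [eq_div_iff (pow_ne_zero 2 hNne)]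
      field_simp
    calc ((N⁻¹:ℝ):ℂ) * (((N⁻¹:ℝ):ℂ) * ((s^2 + s*(1-s)*r : ℝ):ℂ))
        = ((N⁻¹ * (N⁻¹ * (s^2 + s*(1-s)*r)) : ℝ) : ℂ) := by push_cast; ring
      _ = (t : ℂ) := by rw [key]

theorem toeplitz_hausdorff_matrix (n : ℕ) (A : Matrix (Fin n) (Fin n) ℂ) :
    Convex ℝ {z : ℂ | ∃ x : EuclideanSpace ℂ (Fin n), ‖x‖ = 1 ∧
      ⟪x, (Matrix.toEuclideanLin A) x⟫_ℂ = z} := by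
  set T : EuclideanSpace ℂ (Fin n) →L[ℂ] EuclideanSpace ℂ (Fin n) :=
    LinearMap.toContinuousLinearMap (Matrix.toEuclideanLin A) with hTdef
  have hT : ∀ u : EuclideanSpace ℂ (Fin n), (Matrix.toEuclideanLin A) u = T u :=
    fun u => rfl
  intro z₁ hz₁ z₂ hz₂ a b ha hb hab
  simp only [Set.mem_setOf_eq] at hz₁ hz₂ ⊢
  obtain ⟨x, hx, hxv⟩ := hz₁
  obtain ⟨y, hy, hyv⟩ := hz₂
  by_cases hz : z₁ = z₂
  · refine ⟨x, hx, ?_⟩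
    rw [hxv, hz, ← add_smul, hab, one_smul]
  · have hsub : z₁ - z₂ ≠ 0 := sub_ne_zero.mpr hz
    set T' : EuclideanSpace ℂ (Fin n) →L[ℂ] EuclideanSpace ℂ (Fin n) :=
      (z₁ - z₂)⁻¹ • (T - z₂ • ContinuousLinearMap.id ℂ _) with hT'def
    have hform : ∀ u : EuclideanSpace ℂ (Fin n),
        ⟪u, T' u⟫_ℂ = (z₁ - z₂)⁻¹ * (⟪u, T u⟫_ℂ - z₂ * ⟪u, u⟫_ℂ) := by
      intro u
      simp only [hT'def, ContinuousLinearMap.smul_apply, ContinuousLinearMap.sub_apply,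
        ContinuousLinearMap.id_apply, ContinuousLinearMap.coe_smul', Pi.smul_apply,
        inner_smul_right, inner_sub_right]
    have hxx : ⟪x, x⟫_ℂ = 1 := by rw [inner_self_eq_norm_sq_to_K, hx]; norm_num
    have hyy : ⟪y, y⟫_ℂ = 1 := by rw [inner_self_eq_norm_sq_to_K, hy]; norm_num
    have hxT' : ⟪x, T' x⟫_ℂ = 1 := by
      rw [hform, ← hT, hxv, hxx, mul_one]
      exact inv_mul_cancel₀ hsub
    have hyT' : ⟪y, T' y⟫_ℂ = 0 := by
      rw [hform, ← hT, hyv, hyy, mul_one, sub_self, mul_zero]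
    have ha1 : a ∈ Set.Icc (0:ℝ) 1 := ⟨ha, by linarith⟩
    obtain ⟨u, hu, huT⟩ := numrange_aux T' x y hx hy hxT' hyT' ha1
    refine ⟨u, hu, ?_⟩
    have huu : ⟪u, u⟫_ℂ = 1 := by rw [inner_self_eq_norm_sq_to_K, hu]; norm_num
    rw [hform, huu, mul_one] at huT
    have h2 : ⟪u, T u⟫_ℂ - z₂ = (a : ℂ) * (z₁ - z₂) := by
      have := congrArg (fun w => (z₁ - z₂) * w) huT
      rw [← mul_assoc, mul_inv_cancel₀ hsub, one_mul] at this
      rw [this]; ring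
    have hcab : (a : ℂ) + (b : ℂ) = 1 := by
      have : ((a + b : ℝ) : ℂ) = ((1 : ℝ) : ℂ) := by rw [hab]
      push_cast at this; exact this
    rw [hT]
    rw [Complex.real_smul, Complex.real_smul]
    linear_combination h2 - z₂ * hcab
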